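/- Let G be the kite with an infinite tail built on a triangle (the case n = 2): vertices v_0, v_1, v_2 pairwise adjacent, together with u_1, u_2, u_3, … where u_k ~ u_{k+1} for all k ≥ 1 and v_0 ~ u_1. For every 1 ≤ p < ∞, the set of eigenvalues of the shift operator S on ℓ^p(G) is exactly {−1, √5}. -/

import Mathlib

/-- The shift (adjacency) operator: `(Sf)(u) = ∑_{v ~ u} f(v)`. -/
noncomputable def shiftOp {V : Type*} (G : SimpleGraph V) (f : V → ℂ) (u : V) : ℂ :=
  ∑ᶠ v ∈ G.neighborSet u, f v

/-- Membership in ℓ^p: `∑_{v} |f(v)|^p < ∞`. -/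
def memlp {V : Type*} (f : V → ℂ) (p : ℝ) : Prop :=
  Summable fun v => ‖f v‖ ^ p

/-- Base relation for the kite with an infinite tail: `Sum.inl j` is the cycle vertex
`v_j` (`j = 0, …, n`) and `Sum.inr k` is the tail vertex `u_{k+1}` (`k = 0, 1, 2, …`). -/
def kiteRel (n : ℕ) : (Fin (n + 1) ⊕ ℕ) → (Fin (n + 1) ⊕ ℕ) → Prop
  | Sum.inl i, Sum.inl j => (j : ℕ) = ((i : ℕ) + 1) % (n + 1)
  | Sum.inl i, Sum.inr k => (i : ℕ) = 0 ∧ k = 0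
  | Sum.inr k, Sum.inr l => l = k + 1
  | _, _ => False

/-- The kite with an infinite tail: the `(n+1)`-cycle `v_0, …, v_n` together with the
ray `u_1 ~ u_2 ~ ⋯`, and the edge `v_0 ~ u_1`. -/
def kite (n : ℕ) : SimpleGraph (Fin (n + 1) ⊕ ℕ) :=
  SimpleGraph.fromRel (kiteRel n)

section Aux
open Sum Filter


lemma ns0 : (kite 2).neighborSet (inl 0) = {inl 1, inl 2, inr 0} := by
  ext y; rcases y with j | k
  · fin_cases j <;> simp [kite, SimpleGraph.fromRel_adj, kiteRel]
  · simp [kite, SimpleGraph.fromRel_adj, kiteRel]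
lemma ns1 : (kite 2).neighborSet (inl 1) = {inl 0, inl 2} := by
  ext y; rcases y with j | k
  · fin_cases j <;> simp [kite, SimpleGraph.fromRel_adj, kiteRel]
  · simp [kite, SimpleGraph.fromRel_adj, kiteRel]
lemma ns2 : (kite 2).neighborSet (inl 2) = {inl 0, inl 1} := by
  ext y; rcases y with j | k
  · fin_cases j <;> simp [kite, SimpleGraph.fromRel_adj, kiteRel]
  · simp [kite, SimpleGraph.fromRel_adj, kiteRel]
lemma nsr0 : (kite 2).neighborSet (inr 0) = {inl 0, inr 1} := by
  ext y; rcases y with j | k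
  · fin_cases j <;> simp [kite, SimpleGraph.fromRel_adj, kiteRel]
  · simp [kite, SimpleGraph.fromRel_adj, kiteRel]; omega
lemma nsr (k : ℕ) : (kite 2).neighborSet (inr (k+1)) = {inr k, inr (k+2)} := by
  ext y; rcases y with j | l
  · fin_cases j <;> simp [kite, SimpleGraph.fromRel_adj, kiteRel]
  · simp [kite, SimpleGraph.fromRel_adj, kiteRel]; omega
lemma so0 (f : (Fin 3 ⊕ ℕ) → ℂ) :
    shiftOp (kite 2) f (inl 0) = f (inl 1) + f (inl 2) + f (inr 0) := by
  rw [shiftOp, ns0, show ({inl 1, inl 2, inr 0} : Set (Fin 3 ⊕ ℕ)) =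
    (↑({inl 1, inl 2, inr 0} : Finset (Fin 3 ⊕ ℕ))) by simp, finsum_mem_coe_finset]
  rw [Finset.sum_insert (by decide), Finset.sum_insert (by decide), Finset.sum_singleton]
  ring
lemma so1 (f : (Fin 3 ⊕ ℕ) → ℂ) :
    shiftOp (kite 2) f (inl 1) = f (inl 0) + f (inl 2) := by
  rw [shiftOp, ns1, finsum_mem_pair (by decide)]
lemma so2 (f : (Fin 3 ⊕ ℕ) → ℂ) :
    shiftOp (kite 2) f (inl 2) = f (inl 0) + f (inl 1) := by
  rw [shiftOp, ns2, finsum_mem_pair (by decide)]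
lemma sor0 (f : (Fin 3 ⊕ ℕ) → ℂ) :
    shiftOp (kite 2) f (inr 0) = f (inl 0) + f (inr 1) := by
  rw [shiftOp, nsr0, finsum_mem_pair (by decide)]
lemma sor (f : (Fin 3 ⊕ ℕ) → ℂ) (k : ℕ) :
    shiftOp (kite 2) f (inr (k+1)) = f (inr k) + f (inr (k+2)) := by
  rw [shiftOp, nsr, finsum_mem_pair (by simp)]

lemma forward (p : ℝ) (hp : 1 ≤ p) {z : ℂ} {f : (Fin 3 ⊕ ℕ) → ℂ}
    (hf0 : f ≠ 0) (hlp : memlp f p)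
    (heig : ∀ x, shiftOp (kite 2) f x = z * f x) :
    z = -1 ∨ z = ((Real.sqrt 5 : ℝ) : ℂ) := by
  have hp0 : p ≠ 0 := by positivity
  set a := f (inl 0) with hadef
  set f1 := f (inl 1) with hf1def
  set f2 := f (inl 2) with hf2def
  set b : ℕ → ℂ := fun k => f (inr k) with hbdef
  have e0 : f1 + f2 + b 0 = z * a := by have := heig (inl 0); rwa [so0] at this
  have e1 : a + f2 = z * f1 := by have := heig (inl 1); rwa [so1] at this
  have e2 : a + f1 = z * f2 := by have := heig (inl 2); rwa [so2] at this
  have e3 : a + b 1 = z * b 0 := by have := heig (inr 0); rwa [sor0] at this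
  have e4 : ∀ k, b k + b (k+2) = z * b (k+1) := fun k => by
    have := heig (inr (k+1)); rwa [sor] at this
  -- b tends to 0
  have hbsum : Summable (fun k : ℕ => ‖b k‖ ^ p) := hlp.comp_injective Sum.inr_injective
  have hb0' : Tendsto (fun k => ‖b k‖ ^ p) atTop (nhds 0) := hbsum.tendsto_atTop_zero
  have hbnorm : Tendsto (fun k => ‖b k‖) atTop (nhds 0) := by
    have hcont : ContinuousAt (fun x : ℝ => x ^ p⁻¹) 0 :=
      Real.continuousAt_rpow_const 0 p⁻¹ (Or.inr (by positivity))
    have h2 := hcont.tendsto.comp hb0'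
    rw [Real.zero_rpow (inv_ne_zero hp0)] at h2
    refine h2.congr fun k => ?_
    exact Real.rpow_rpow_inv (norm_nonneg _) hp0
  have hbt : Tendsto b atTop (nhds 0) := tendsto_zero_iff_norm_tendsto_zero.mpr hbnorm
  -- roots of t^2 - z t + 1
  obtain ⟨w, hw⟩ := IsAlgClosed.exists_pow_nat_eq (k := ℂ) (z^2 - 4) (n := 2) two_pos
  have key : ∃ r s : ℂ, r + s = z ∧ r * s = 1 ∧ ‖r‖ ≤ 1 ∧ 1 ≤ ‖s‖ := by
    have hprod : ((z+w)/2) * ((z-w)/2) = 1 := by linear_combination (-(1:ℂ)/4) * hw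
    have hnorm : ‖(z+w)/2‖ * ‖(z-w)/2‖ = 1 := by rw [← norm_mul, hprod, norm_one]
    rcases le_total ‖(z+w)/2‖ ‖(z-w)/2‖ with h | h
    · refine ⟨(z+w)/2, (z-w)/2, by ring, hprod, ?_, ?_⟩
      · nlinarith [norm_nonneg ((z+w)/2), norm_nonneg ((z-w)/2)]
      · nlinarith [norm_nonneg ((z+w)/2), norm_nonneg ((z-w)/2)]
    · refine ⟨(z-w)/2, (z+w)/2, by ring, by linear_combination hprod, ?_, ?_⟩
      · nlinarith [norm_nonneg ((z+w)/2), norm_nonneg ((z-w)/2)]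
      · nlinarith [norm_nonneg ((z+w)/2), norm_nonneg ((z-w)/2)]
  obtain ⟨r, s, hsum, hprod, hrle, hsge⟩ := key
  have hs0 : s ≠ 0 := by intro h; rw [h, mul_zero] at hprod; exact one_ne_zero hprod.symm
  have hr0 : r ≠ 0 := by intro h; rw [h, zero_mul] at hprod; exact one_ne_zero hprod.symm
  set d : ℕ → ℂ := fun k => b (k+1) - r * b k with hddef
  have hdrec : ∀ k, d (k+1) = s * d k := by
    intro k
    show b (k+2) - r * b (k+1) = s * (b (k+1) - r * b k)
    linear_combination e4 k - b (k+1) * hsum + b k * hprod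
  have hdk : ∀ k, d k = s ^ k * d 0 := by
    intro k; induction k with
    | zero => simp
    | succ n ih => rw [hdrec n, ih, pow_succ]; ring
  have hdt : Tendsto d atTop (nhds 0) := by
    have h1 : Tendsto (fun k => b (k+1)) atTop (nhds 0) :=
      hbt.comp (tendsto_add_atTop_nat 1)
    have h2 := h1.sub (hbt.const_mul r)
    simpa using h2
  have hd0 : d 0 = 0 := by
    have hlb : ∀ k, ‖d 0‖ ≤ ‖d k‖ := by
      intro k
      rw [hdk k, norm_mul, norm_pow]
      have h1 : (1:ℝ) ≤ ‖s‖ ^ k := one_le_pow₀ hsge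
      nlinarith [norm_nonneg (d 0)]
    have hnd : Tendsto (fun k => ‖d k‖) atTop (nhds 0) :=
      tendsto_zero_iff_norm_tendsto_zero.mp hdt
    have := ge_of_tendsto hnd (Eventually.of_forall hlb)
    exact norm_le_zero_iff.mp this
  have hbk : ∀ k, b (k+1) = r * b k := by
    intro k
    have h1 : d k = 0 := by rw [hdk k, hd0, mul_zero]
    have h2 : b (k+1) - r * b k = 0 := h1
    linear_combination h2
  have hbpow : ∀ k, b k = r ^ k * b 0 := by
    intro k; induction k with
    | zero => simp
    | succ n ih => rw [hbk n, ih, pow_succ]; ring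
  by_cases hb0 : b 0 = 0
  · -- tail vanishes, eigenvalue -1
    left
    have hbz : ∀ k, b k = 0 := fun k => by rw [hbpow k, hb0, mul_zero]
    have ha : a = 0 := by
      have := e3
      rw [hbz 1, hbz 0] at this
      simpa using this
    have h5 : f1 + f2 = 0 := by
      have := e0; rw [hbz 0, ha] at this; simpa using this
    have h6 : f2 = z * f1 := by
      have := e1; rw [ha] at this; simpa using this
    have hf12 : f1 ≠ 0 := by
      intro h1
      apply hf0
      have h2 : f2 = 0 := by rw [h6, h1, mul_zero]
      funext x
      rcases x with j | k
      · fin_cases j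
        · exact ha
        · exact h1
        · exact h2
      · exact hbz k
    have h7 : (z + 1) * f1 = 0 := by linear_combination h5 - h6
    rcases mul_eq_zero.mp h7 with h | h
    · linear_combination h
    · exact absurd h hf12
  · -- nonvanishing tail, eigenvalue √5
    have hrlt : ‖r‖ < 1 := by
      rcases lt_or_eq_of_le hrle with h | h
      · exact h
      · exfalso
        have heq : ∀ k, ‖b k‖ = ‖b 0‖ := fun k => by
          rw [hbpow k, norm_mul, norm_pow, h, one_pow, one_mul]
        have h2 : Tendsto (fun _ : ℕ => ‖b 0‖) atTop (nhds 0) :=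
          hbnorm.congr heq
        have h3 := tendsto_nhds_unique h2 tendsto_const_nhds
        exact hb0 (norm_eq_zero.mp h3.symm)
    have ha : a = s * b 0 := by
      have h1 : b 1 = r * b 0 := hbk 0
      linear_combination e3 - h1 - b 0 * hsum
    have hzne : z ≠ -1 := by
      intro h
      have hs2 : s = -1 - r := by rw [← hsum] at h; linear_combination h
      have hcu : r^2 + r + 1 = 0 := by linear_combination (-1 : ℂ) * hprod + r * hs2
      have hr3 : r^3 = 1 := by linear_combination (r - 1) * hcu
      have h3 : ‖r‖^3 = 1 := by rw [← norm_pow, hr3, norm_one]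
      have h4 : ‖r‖^3 < 1 := pow_lt_one₀ (norm_nonneg r) hrlt (by norm_num)
      linarith
    have hzne1 : z ≠ 1 := by
      intro h
      have hs2 : s = 1 - r := by rw [← hsum] at h; linear_combination h
      have hcu : r^2 - r + 1 = 0 := by linear_combination (-1 : ℂ) * hprod + r * hs2
      have hr3 : r^3 = -1 := by linear_combination (r + 1) * hcu
      have h3 : ‖r‖^3 = 1 := by rw [← norm_pow, hr3]; simp
      have h4 : ‖r‖^3 < 1 := pow_lt_one₀ (norm_nonneg r) hrlt (by norm_num)
      linarith
    have h12 : f1 = f2 := by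
      have h7 : (z + 1) * (f1 - f2) = 0 := by linear_combination e2 - e1
      rcases mul_eq_zero.mp h7 with h | h
      · exact absurd (by linear_combination h) hzne
      · linear_combination h
    have hf1 : (z - 1) * f1 = a := by linear_combination -e1 - h12
    have A1 : 2 * f1 + b 0 = z * a := by linear_combination e0 + h12
    have A2 : 2 * a + (z - 1) * b 0 = (z-1) * z * a := by
      linear_combination (z-1) * A1 - 2 * hf1
    have A3 : 2 * (s * b 0) + (z - 1) * b 0 = (z-1) * z * (s * b 0) := by
      linear_combination A2 + ((z-1)*z - 2) * ha
    rw [← hsum] at A3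
    have A4 : s * ((s^2 - s - 1) * b 0) = 0 := by
      linear_combination (-1 : ℂ) * A3 + b 0 * (1 - r - 2*s) * hprod
    have hkey : s^2 - s - 1 = 0 := by
      rcases mul_eq_zero.mp A4 with h | h
      · exact absurd h hs0
      · rcases mul_eq_zero.mp h with h' | h'
        · exact h'
        · exact absurd h' hb0
    have hrs2 : r = s - 1 := by
      have h8 : s * (r - (s - 1)) = 0 := by linear_combination hprod - hkey
      rcases mul_eq_zero.mp h8 with h | h
      · exact absurd h hs0
      · linear_combination h
    have hz2 : z^2 = 5 := by
      linear_combination (z + 2*s - 1) * (hrs2 - hsum) + 4 * hkey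
    set c := Real.sqrt 5 with hcdef
    have hc2 : ((c : ℂ))^2 = 5 := by
      norm_cast
      exact_mod_cast Real.sq_sqrt (by norm_num : (5:ℝ) ≥ 0)
    have h9 : (z - c) * (z + c) = 0 := by linear_combination hz2 - hc2
    rcases mul_eq_zero.mp h9 with h | h
    · right; linear_combination h
    · exfalso
      have hzval : z = -(c:ℂ) := by linear_combination h
      have hsval : s = (((1 - c)/2 : ℝ) : ℂ) := by
        push_cast
        linear_combination (hsum - hrs2 + (by linear_combination hzval : z + (c:ℂ) = 0))/2
      have hc2' : c^2 = 5 := Real.sq_sqrt (by norm_num)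
      have hcnn : 0 ≤ c := Real.sqrt_nonneg 5
      have habs : ‖s‖ < 1 := by
        rw [hsval, Complex.norm_real, Real.norm_eq_abs, abs_lt]
        constructor <;> nlinarith
      linarith

lemma eigAll (f : (Fin 3 ⊕ ℕ) → ℂ) (z : ℂ)
    (h0 : f (inl 1) + f (inl 2) + f (inr 0) = z * f (inl 0))
    (h1 : f (inl 0) + f (inl 2) = z * f (inl 1))
    (h2 : f (inl 0) + f (inl 1) = z * f (inl 2))
    (h3 : f (inl 0) + f (inr 1) = z * f (inr 0))
    (h4 : ∀ k, f (inr k) + f (inr (k+2)) = z * f (inr (k+1))) :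
    ∀ x, shiftOp (kite 2) f x = z * f x := by
  rintro (j | k)
  · fin_cases j
    · show shiftOp (kite 2) f (inl 0) = z * f (inl 0); rw [so0]; exact h0
    · show shiftOp (kite 2) f (inl 1) = z * f (inl 1); rw [so1]; exact h1
    · show shiftOp (kite 2) f (inl 2) = z * f (inl 2); rw [so2]; exact h2
  · rcases k with _ | k
    · rw [sor0]; exact h3
    · rw [sor]; exact h4 k

lemma rev_neg_one (p : ℝ) (hp : 1 ≤ p) :
    ∃ f : (Fin 3 ⊕ ℕ) → ℂ, f ≠ 0 ∧ memlp f p ∧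
      ∀ x, shiftOp (kite 2) f x = (-1) * f x := by
  have hp0 : p ≠ 0 := by positivity
  refine ⟨Sum.elim ![0, 1, -1] (fun _ => 0), ?_, ?_, ?_⟩
  · intro h
    have := congrFun h (inl 1)
    simp [Matrix.cons_val_one, Matrix.head_cons] at this
  · apply summable_of_ne_finset_zero (s := ({inl 0, inl 1, inl 2} : Finset (Fin 3 ⊕ ℕ)))
    rintro (j | k) hv
    · exfalso; apply hv; fin_cases j <;> decide
    · simp [Real.zero_rpow hp0]
  · apply eigAll <;>
      norm_num [Matrix.cons_val_zero, Matrix.cons_val_one, Matrix.head_cons, Matrix.cons_val_two,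
        Matrix.tail_cons]

lemma rev_sqrt5 (p : ℝ) (hp : 1 ≤ p) :
    ∃ f : (Fin 3 ⊕ ℕ) → ℂ, f ≠ 0 ∧ memlp f p ∧
      ∀ x, shiftOp (kite 2) f x = ((Real.sqrt 5 : ℝ) : ℂ) * f x := by
  have hp0 : p ≠ 0 := by positivity
  have hppos : 0 < p := by positivity
  set c := Real.sqrt 5 with hcdef
  have hc2 : c^2 = 5 := Real.sq_sqrt (by norm_num)
  have hcnn : 0 ≤ c := Real.sqrt_nonneg 5
  have hclt : c < 3 := by nlinarith
  have hcgt : 2 < c := by nlinarith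
  set R : ℂ := ((c : ℝ) : ℂ) with hRdef
  have hR2 : R^2 = 5 := by rw [hRdef]; norm_cast
  have hR1 : R - 1 ≠ 0 := by
    rw [hRdef, show ((c:ℝ):ℂ) - 1 = (((c - 1 : ℝ)):ℂ) by push_cast; ring]
    exact_mod_cast Complex.ofReal_ne_zero.mpr (by linarith)
  have hkey : 1 + ((R-1)/2)^2 = R * ((R-1)/2) := by
    linear_combination (-(1:ℂ)/4) * hR2
  have htre : ((R-1)/2 : ℂ) = (((c-1)/2 : ℝ) : ℂ) := by rw [hRdef]; push_cast; ring
  have htnorm : ‖((R-1)/2 : ℂ)‖ < 1 := by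
    rw [htre, Complex.norm_real, Real.norm_eq_abs, abs_lt]
    constructor <;> nlinarith
  have htnn : (0:ℝ) ≤ ‖((R-1)/2 : ℂ)‖ := norm_nonneg _
  refine ⟨Sum.elim ![1, 1/(R-1), 1/(R-1)] (fun k => ((R-1)/2)^(k+1)), ?_, ?_, ?_⟩
  · intro h
    have := congrFun h (inl 0)
    simp [Matrix.cons_val_zero] at this
  · -- summability
    set f : (Fin 3 ⊕ ℕ) → ℂ := Sum.elim ![1, 1/(R-1), 1/(R-1)] (fun k => ((R-1)/2)^(k+1))
      with hfdef
    set q : ℝ := ‖((R-1)/2 : ℂ)‖ ^ p with hqdef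
    have hq0 : 0 ≤ q := Real.rpow_nonneg htnn p
    have hq1 : q < 1 := Real.rpow_lt_one htnn htnorm hppos
    have hgeo : Summable (fun k : ℕ => q ^ (k+1)) := by
      have := (summable_geometric_of_lt_one hq0 hq1).mul_left q
      refine this.congr fun k => ?_
      rw [pow_succ]; ring
    have hR : Summable (fun k : ℕ => ‖f (inr k)‖ ^ p) := by
      refine hgeo.congr fun k => ?_
      have hnv : ‖f (inr k)‖ = ‖((R-1)/2 : ℂ)‖ ^ (k+1) := by
        rw [hfdef]; simp [norm_pow]
      rw [hnv, ← Real.rpow_natCast (‖((R-1)/2 : ℂ)‖) (k+1), ← Real.rpow_mul htnn, mul_comm,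
        Real.rpow_mul htnn, Real.rpow_natCast, hqdef]
    have h1 : Summable (fun v : Fin 3 ⊕ ℕ =>
        Sum.elim (fun j : Fin 3 => ‖f (inl j)‖ ^ p) (fun _ => (0:ℝ)) v) := by
      apply summable_of_ne_finset_zero (s := ({inl 0, inl 1, inl 2} : Finset (Fin 3 ⊕ ℕ)))
      rintro (j | k) hv
      · exfalso; apply hv; fin_cases j <;> decide
      · rfl
    have h2 : Summable (fun v : Fin 3 ⊕ ℕ =>
        Sum.elim (fun _ : Fin 3 => (0:ℝ)) (fun k => ‖f (inr k)‖ ^ p) v) := by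
      refine (Function.Injective.summable_iff Sum.inr_injective ?_).mp hR
      rintro (j | k) hv
      · rfl
      · exact absurd ⟨k, rfl⟩ hv
    have hadd := h1.add h2
    refine hadd.congr fun v => ?_
    rcases v with j | k
    · simp
    · simp
  · apply eigAll
    · show 1/(R-1) + 1/(R-1) + ((R-1)/2)^(0+1) = R * 1
      field_simp
      linear_combination (-1/2 : ℂ) * hR2
    · show (1:ℂ) + 1/(R-1) = R * (1/(R-1))
      field_simp
      ring
    · show (1:ℂ) + 1/(R-1) = R * (1/(R-1))
      field_simp
      ring
    · show (1:ℂ) + ((R-1)/2)^(1+1) = R * ((R-1)/2)^(0+1)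
      linear_combination hkey
    · intro k
      show ((R-1)/2)^(k+1) + ((R-1)/2)^(k+2+1) = R * ((R-1)/2)^(k+1+1)
      linear_combination ((R-1)/2)^(k+1) * hkey

end Aux

/-- For the kite with an infinite tail built on a triangle (`n = 2`),
for every `1 ≤ p < ∞` the set of eigenvalues of the shift on `ℓ^p` is exactly
`{−1, √5}`. -/

theorem stmt12 (p : ℝ) (hp : 1 ≤ p) :
    {z : ℂ | ∃ f : (Fin 3 ⊕ ℕ) → ℂ, f ≠ 0 ∧ memlp f p ∧
        ∀ x, shiftOp (kite 2) f x = z * f x}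
      = {(-1 : ℂ), ((Real.sqrt 5 : ℝ) : ℂ)} := by
  ext z
  simp only [Set.mem_setOf_eq, Set.mem_insert_iff, Set.mem_singleton_iff]
  constructor
  · rintro ⟨f, h1, h2, h3⟩
    exact forward p hp h1 h2 h3
  · rintro (rfl | rfl)
    · exact rev_neg_one p hp
    · exact rev_sqrt5 p hp
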